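/- Let E and F be real Banach spaces, Λ₁ > 0, γ ≥ 0 with 2 Λ₁² γ < 1. Let f : ℝ × E × F → ℝ satisfy |f(τ₁, x, y) − f(τ₂, x, y)| ≥ Λ₁^{−1} |τ₁ − τ₂|, |f(τ, x₁, y) − f(τ, x₂, y)| ≤ Λ₁ ‖x₁ − x₂‖, |f(τ, x, y₁) − f(τ, x, y₂)| ≤ Λ₁ ‖y₁ − y₂‖ for all arguments. Let g^s : ℝ × E × F → F satisfy ‖g^s(τ₁, x, y) − g^s(τ₂, x, y)‖ ≤ Π₁ |τ₁ − τ₂|, ‖g^s(τ, x₁, y) − g^s(τ, x₂, y)‖ ≤ Π₂ ‖x₁ − x₂‖, ‖g^s(τ, x, y₁) − g^s(τ, x, y₂)‖ ≤ Π₃ ‖y₁ − y₂‖ for constants Π₁, Π₂, Π₃ ≥ 0. Let x^u : ℝ → E and x^s : ℝ → F be γ-Lipschitz, and let τ⁻ : ℝ → ℝ satisfy f(τ⁻(τ), x^u(τ⁻(τ)), x^s(τ⁻(τ))) = τ for all τ. Define x₁^s(τ) = g^s(τ⁻(τ), x^u(τ⁻(τ)), x^s(τ⁻(τ))). Then for all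 τ₁, τ₂: ‖x₁^s(τ₁) − x₁^s(τ₂)‖ ≤ [Λ₁ (Π₁ + Π₂ γ + Π₃ γ) / (1 − 2 Λ₁² γ)] |τ₁ − τ₂|. -/

import Mathlib

/-- The Lipschitz estimate (act14) for the stable component of the
graph transform: with f expanding in τ at rate Λ₁⁻¹ and Λ₁-Lipschitz in the other
variables, g^s partially Lipschitz with constants P₁, P₂, P₃, γ-Lipschitz sections
x^u, x^s with 2Λ₁²γ < 1, and τ⁻ the backward hitting parameter, the transformed
stable component x₁^s(τ) = g^s(τ⁻(τ), x^u(τ⁻(τ)), x^s(τ⁻(τ))) is Lipschitz with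
constant Λ₁(P₁ + P₂γ + P₃γ)/(1 − 2Λ₁²γ). -/
theorem graph_transform_stable_lipschitz
    {E F : Type*} [NormedAddCommGroup E] [NormedSpace ℝ E] [CompleteSpace E]
    [NormedAddCommGroup F] [NormedSpace ℝ F] [CompleteSpace F]
    (f : ℝ → E → F → ℝ) (gs : ℝ → E → F → F) (Λ₁ γ P₁ P₂ P₃ : ℝ)
    (hΛ₁ : 0 < Λ₁) (hγ : 0 ≤ γ) (hsmall : 2 * Λ₁ ^ 2 * γ < 1)
    (hP₁ : 0 ≤ P₁) (hP₂ : 0 ≤ P₂) (hP₃ : 0 ≤ P₃)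
    (hf1 : ∀ τ₁ τ₂ x y, Λ₁⁻¹ * |τ₁ - τ₂| ≤ |f τ₁ x y - f τ₂ x y|)
    (hf2 : ∀ τ x₁ x₂ y, |f τ x₁ y - f τ x₂ y| ≤ Λ₁ * ‖x₁ - x₂‖)
    (hf3 : ∀ τ x y₁ y₂, |f τ x y₁ - f τ x y₂| ≤ Λ₁ * ‖y₁ - y₂‖)
    (hg1 : ∀ τ₁ τ₂ x y, ‖gs τ₁ x y - gs τ₂ x y‖ ≤ P₁ * |τ₁ - τ₂|)
    (hg2 : ∀ τ x₁ x₂ y, ‖gs τ x₁ y - gs τ x₂ y‖ ≤ P₂ * ‖x₁ - x₂‖)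
    (hg3 : ∀ τ x y₁ y₂, ‖gs τ x y₁ - gs τ x y₂‖ ≤ P₃ * ‖y₁ - y₂‖)
    (xu : ℝ → E) (xs : ℝ → F)
    (hxu : ∀ τ₁ τ₂, ‖xu τ₁ - xu τ₂‖ ≤ γ * |τ₁ - τ₂|)
    (hxs : ∀ τ₁ τ₂, ‖xs τ₁ - xs τ₂‖ ≤ γ * |τ₁ - τ₂|)
    (τm : ℝ → ℝ) (hτm : ∀ τ, f (τm τ) (xu (τm τ)) (xs (τm τ)) = τ)
    (xs1 : ℝ → F) (hxs1 : ∀ τ, xs1 τ = gs (τm τ) (xu (τm τ)) (xs (τm τ))) :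
    ∀ τ₁ τ₂, ‖xs1 τ₁ - xs1 τ₂‖ ≤
      (Λ₁ * (P₁ + P₂ * γ + P₃ * γ) / (1 - 2 * Λ₁ ^ 2 * γ)) * |τ₁ - τ₂| := by
  intro τ₁ τ₂
  set a := τm τ₁ with ha
  set b := τm τ₂ with hb
  set d := |a - b| with hd
  have hden : 0 < 1 - 2 * Λ₁ ^ 2 * γ := by linarith
  -- Lipschitz bound for τm
  have key : Λ₁⁻¹ * d ≤ |τ₁ - τ₂| + 2 * Λ₁ * γ * d := by
    have h1 : Λ₁⁻¹ * d ≤ |f a (xu a) (xs a) - f b (xu a) (xs a)| := hf1 a b _ _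
    have h2 : |f b (xu a) (xs a) - f b (xu b) (xs a)| ≤ Λ₁ * (γ * d) :=
      le_trans (hf2 b _ _ _) (by
        have := hxu a b
        nlinarith [hΛ₁.le])
    have h3 : |f b (xu b) (xs a) - f b (xu b) (xs b)| ≤ Λ₁ * (γ * d) :=
      le_trans (hf3 b _ _ _) (by
        have := hxs a b
        nlinarith [hΛ₁.le])
    have h4 : |f a (xu a) (xs a) - f b (xu b) (xs b)| = |τ₁ - τ₂| := by
      rw [ha, hb, hτm, hτm]
    have htri : |f a (xu a) (xs a) - f b (xu a) (xs a)| ≤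
        |f a (xu a) (xs a) - f b (xu b) (xs b)| +
        |f b (xu b) (xs b) - f b (xu b) (xs a)| +
        |f b (xu b) (xs a) - f b (xu a) (xs a)| := by
      calc |f a (xu a) (xs a) - f b (xu a) (xs a)|
          ≤ |f a (xu a) (xs a) - f b (xu b) (xs a)| + |f b (xu b) (xs a) - f b (xu a) (xs a)| :=
            abs_sub_le _ _ _
        _ ≤ (|f a (xu a) (xs a) - f b (xu b) (xs b)| + |f b (xu b) (xs b) - f b (xu b) (xs a)|)
            + |f b (xu b) (xs a) - f b (xu a) (xs a)| := by
            gcongr; exact abs_sub_le _ _ _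
    have h2' : |f b (xu b) (xs a) - f b (xu a) (xs a)| ≤ Λ₁ * (γ * d) := by
      rw [abs_sub_comm]; exact h2
    have h3' : |f b (xu b) (xs b) - f b (xu b) (xs a)| ≤ Λ₁ * (γ * d) := by
      rw [abs_sub_comm]; exact h3
    nlinarith [h1, htri]
  have hdle : d ≤ Λ₁ / (1 - 2 * Λ₁ ^ 2 * γ) * |τ₁ - τ₂| := by
    rw [div_mul_eq_mul_div, le_div_iff₀ hden]
    have hinv : Λ₁ * Λ₁⁻¹ = 1 := mul_inv_cancel₀ hΛ₁.ne'
    have h := mul_le_mul_of_nonneg_left key hΛ₁.le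
    rw [← mul_assoc, hinv, one_mul] at h
    nlinarith [h]
  -- bound xs1
  have hbound : ‖xs1 τ₁ - xs1 τ₂‖ ≤ (P₁ + P₂ * γ + P₃ * γ) * d := by
    rw [hxs1, hxs1]
    calc ‖gs a (xu a) (xs a) - gs b (xu b) (xs b)‖
        ≤ ‖gs a (xu a) (xs a) - gs b (xu a) (xs a)‖ +
          ‖gs b (xu a) (xs a) - gs b (xu b) (xs a)‖ +
          ‖gs b (xu b) (xs a) - gs b (xu b) (xs b)‖ := by
          have := norm_sub_le_norm_sub_add_norm_sub (gs a (xu a) (xs a))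
            (gs b (xu b) (xs a)) (gs b (xu b) (xs b))
          have := norm_sub_le_norm_sub_add_norm_sub (gs a (xu a) (xs a))
            (gs b (xu a) (xs a)) (gs b (xu b) (xs a))
          linarith
      _ ≤ P₁ * d + P₂ * (γ * d) + P₃ * (γ * d) := by
          gcongr
          · exact hg1 a b _ _
          · exact le_trans (hg2 b _ _ _) (by nlinarith [hxu a b, hP₂])
          · exact le_trans (hg3 b _ _ _) (by nlinarith [hxs a b, hP₃])
      _ = (P₁ + P₂ * γ + P₃ * γ) * d := by ring
  have hd0 : 0 ≤ d := abs_nonneg _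
  have hc : 0 ≤ P₁ + P₂ * γ + P₃ * γ := by positivity
  calc ‖xs1 τ₁ - xs1 τ₂‖ ≤ (P₁ + P₂ * γ + P₃ * γ) * d := hbound
    _ ≤ (P₁ + P₂ * γ + P₃ * γ) * (Λ₁ / (1 - 2 * Λ₁ ^ 2 * γ) * |τ₁ - τ₂|) := by gcongr
    _ = Λ₁ * (P₁ + P₂ * γ + P₃ * γ) / (1 - 2 * Λ₁ ^ 2 * γ) * |τ₁ - τ₂| := by
        field_simp
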